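/- Let σ > 0 and κ ∈ ℝ. Let A₁ < 0 < A₂ be the two real roots of the quadratic 2σ²A² − 2κA − 1 = 0, set ω = 2σ²(A₁ − A₂), and define A(τ) = A₁A₂(1 − e^{ωτ})/(A₂ − A₁e^{ωτ}) for τ ≥ 0. Then the denominator A₂ − A₁e^{ωτ} is strictly positive for every τ ≥ 0, A(0) = 0, and A is differentiable on [0, ∞) with A′(τ) = 2σ²A(τ)² − 2κA(τ) − 1 for every τ ≥ 0 (equivalently, −A′(τ) − 2κA(τ) + 2σ²A(τ)² − 1 = 0). -/

import Mathlib

/-- properties of the solution `A(τ) = A₁A₂(1 − e^{ωτ})/(A₂ − A₁e^{ωτ})`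
of the Riccati equation `−A′ − 2κA + 2σ²A² − 1 = 0` with `A(0) = 0`. -/
theorem stmt_0 (σ κ : ℝ) (hσ : 0 < σ)
    (A₁ A₂ : ℝ) (hA₁ : A₁ < 0) (hA₂ : 0 < A₂)
    (hroot₁ : 2 * σ ^ 2 * A₁ ^ 2 - 2 * κ * A₁ - 1 = 0)
    (hroot₂ : 2 * σ ^ 2 * A₂ ^ 2 - 2 * κ * A₂ - 1 = 0)
    (ω : ℝ) (hω : ω = 2 * σ ^ 2 * (A₁ - A₂))
    (A : ℝ → ℝ)
    (hA : ∀ τ, A τ = A₁ * A₂ * (1 - Real.exp (ω * τ)) / (A₂ - A₁ * Real.exp (ω * τ))) :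
    (∀ τ, 0 ≤ τ → 0 < A₂ - A₁ * Real.exp (ω * τ)) ∧
    A 0 = 0 ∧
    (∀ τ, 0 ≤ τ →
      ∃ A' : ℝ, HasDerivAt A A' τ ∧
        A' = 2 * σ ^ 2 * (A τ) ^ 2 - 2 * κ * A τ - 1 ∧
        -A' - 2 * κ * A τ + 2 * σ ^ 2 * (A τ) ^ 2 - 1 = 0) := by
  have hA12 : A₁ - A₂ ≠ 0 := by nlinarith
  have hp : 2 * σ ^ 2 * (A₁ * A₂) = -1 := by
    have h : (A₁ - A₂) * (2 * σ ^ 2 * (A₁ * A₂) + 1) = 0 := by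
      linear_combination A₂ * hroot₁ - A₁ * hroot₂
    rcases mul_eq_zero.mp h with h | h
    · exact absurd h hA12
    · linarith
  have hκ : κ = σ ^ 2 * (A₁ + A₂) := by
    have h : (A₁ - A₂) * (2 * σ ^ 2 * (A₁ + A₂) - 2 * κ) = 0 := by
      linear_combination hroot₁ - hroot₂
    rcases mul_eq_zero.mp h with h | h
    · exact absurd h hA12
    · linarith
  have hden : ∀ τ : ℝ, 0 < A₂ - A₁ * Real.exp (ω * τ) := by
    intro τ
    have h := mul_neg_of_neg_of_pos hA₁ (Real.exp_pos (ω * τ))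
    linarith
  refine ⟨fun τ _ => hden τ, ?_, ?_⟩
  · rw [hA 0]
    simp
  · intro τ _
    set E := Real.exp (ω * τ) with hE
    have hEexp : HasDerivAt (fun t : ℝ => Real.exp (ω * t)) (ω * E) τ := by
      have h1 : HasDerivAt (fun t : ℝ => ω * t) ω τ := by
        simpa using (hasDerivAt_id τ).const_mul ω
      simpa [hE, mul_comm] using h1.exp
    have hN : HasDerivAt (fun t : ℝ => A₁ * A₂ * (1 - Real.exp (ω * t)))
        (A₁ * A₂ * (-(ω * E))) τ := by
      have h := ((hasDerivAt_const τ (1:ℝ)).sub hEexp).const_mul (A₁ * A₂)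
      simpa [Pi.sub_def] using h
    have hD : HasDerivAt (fun t : ℝ => A₂ - A₁ * Real.exp (ω * t))
        (-(A₁ * (ω * E))) τ := by
      simpa [Pi.sub_def] using ((hasDerivAt_const τ A₂).sub (hEexp.const_mul A₁))
    have hDne : A₂ - A₁ * E ≠ 0 := ne_of_gt (hden τ)
    have hAfun : A = fun t => A₁ * A₂ * (1 - Real.exp (ω * t)) / (A₂ - A₁ * Real.exp (ω * t)) :=
      funext hA
    have hder : HasDerivAt A
        ((A₁ * A₂ * (-(ω * E)) * (A₂ - A₁ * E) -
          A₁ * A₂ * (1 - E) * (-(A₁ * (ω * E)))) / (A₂ - A₁ * E) ^ 2) τ := by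
      rw [hAfun]
      exact hN.div hD hDne
    have hAτ : A τ = A₁ * A₂ * (1 - E) / (A₂ - A₁ * E) := by rw [hA τ, ← hE]
    have hnum : A₁ * A₂ * (-(ω * E)) * (A₂ - A₁ * E) -
        A₁ * A₂ * (1 - E) * (-(A₁ * (ω * E))) =
        2 * σ ^ 2 * (A₁ * A₂ * (1 - E)) ^ 2 -
          2 * κ * (A₁ * A₂ * (1 - E)) * (A₂ - A₁ * E) - (A₂ - A₁ * E) ^ 2 := by
      subst hω
      linear_combination
        (E * (A₁ - A₂) ^ 2 - A₁ * A₂ * (1 - E) ^ 2 +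
          (A₁ + A₂) * (1 - E) * (A₂ - A₁ * E)) * hp +
        (2 * A₁ * A₂ * (1 - E) * (A₂ - A₁ * E)) * hκ
    have hfrac : 2 * σ ^ 2 * (A₁ * A₂ * (1 - E) / (A₂ - A₁ * E)) ^ 2 -
        2 * κ * (A₁ * A₂ * (1 - E) / (A₂ - A₁ * E)) - 1 =
        (2 * σ ^ 2 * (A₁ * A₂ * (1 - E)) ^ 2 -
          2 * κ * (A₁ * A₂ * (1 - E)) * (A₂ - A₁ * E) - (A₂ - A₁ * E) ^ 2) /
          (A₂ - A₁ * E) ^ 2 := by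
      field_simp
    have heq : (A₁ * A₂ * (-(ω * E)) * (A₂ - A₁ * E) -
        A₁ * A₂ * (1 - E) * (-(A₁ * (ω * E)))) / (A₂ - A₁ * E) ^ 2 =
        2 * σ ^ 2 * (A τ) ^ 2 - 2 * κ * A τ - 1 := by
      rw [hAτ, hfrac, hnum]
    exact ⟨_, hder, heq, by rw [heq]; ring⟩
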